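/- Let n, b, M, d be positive integers, L̄ > 0 and α ∈ ℝ. For each m ∈ {1, …, M} let F_{m,1}, …, F_{m,n} : ℝ^d → ℝ^d satisfy (1/n) Σ_{i=1}^n ‖F_{m,i}(u) − F_{m,i}(v)‖² ≤ L̄² ‖u − v‖² for all u, v ∈ ℝ^d, and set F_m = (1/n) Σ_{i=1}^n F_{m,i}. Fix 𝐳, 𝐳', 𝐰 ∈ (ℝ^d)^M. Let the M·b random indices j_{m,l} (m ∈ {1,…,M}, l ∈ {1,…,b}) be independent and uniformly distributed on {1, …, n}, and define the random vector δ ∈ (ℝ^d)^M whose m-th block is δ_m = (1/b) Σ_{l=1}^b [ F_{m,j_{m,l}}(z_m) − F_{m,j_{m,l}}(w_m) + α ( F_{m,j_{m,l}}(z_m) − F_{m,j_{m,l}}(z'_m) ) ] + F_m(w_m). Then E[δ] = 𝔽(𝐳) + α(𝔽(𝐳) − 𝔽(𝐳')) and E‖δ − E[δ]‖² ≤ (2 L̄²/b) ( ‖𝐳 − 𝐰‖² + α² ‖𝐳 − 𝐳'‖² ). -/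

import Mathlib

open scoped RealInnerProductSpace

lemma sum_fun_apply {ι : Type*} [Fintype ι] [DecidableEq ι] {n : ℕ} {V : Type*} [AddCommMonoid V]
    (p : ι) (h : Fin n → V) :
    ∑ ω : ι → Fin n, h (ω p) = (n ^ (Fintype.card ι - 1)) • ∑ i, h i := by
  rw [← (Equiv.piSplitAt p (fun _ : ι => Fin n)).symm.sum_comp (fun ω => h (ω p))]
  rw [Fintype.sum_prod_type]
  have hval : ∀ (x : Fin n) (f : {j // j ≠ p} → Fin n),
      ((Equiv.piSplitAt p (fun _ : ι => Fin n)).symm (x, f)) p = x := by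
    intro x f
    simp [Equiv.piSplitAt]
  simp only [hval, Finset.sum_const, Finset.card_univ, ← Finset.smul_sum]
  congr 1
  simp [Fintype.card_fun, Fintype.card_subtype_compl]

lemma sum_fun_apply2 {ι : Type*} [Fintype ι] [DecidableEq ι] {n : ℕ} {V : Type*} [AddCommMonoid V]
    (p q : ι) (hpq : q ≠ p) (h : Fin n → Fin n → V) :
    ∑ ω : ι → Fin n, h (ω p) (ω q) = (n ^ (Fintype.card ι - 2)) • ∑ i, ∑ j, h i j := by
  rw [← (Equiv.piSplitAt p (fun _ : ι => Fin n)).symm.sum_comp (fun ω => h (ω p) (ω q))]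
  rw [Fintype.sum_prod_type]
  have hvalp : ∀ (x : Fin n) (f : {j // j ≠ p} → Fin n),
      ((Equiv.piSplitAt p (fun _ : ι => Fin n)).symm (x, f)) p = x := by
    intro x f; simp [Equiv.piSplitAt]
  have hvalq : ∀ (x : Fin n) (f : {j // j ≠ p} → Fin n),
      ((Equiv.piSplitAt p (fun _ : ι => Fin n)).symm (x, f)) q = f (⟨q, hpq⟩ : {j // j ≠ p}) := by
    intro x f; simp [Equiv.piSplitAt, dif_neg hpq]
  simp only [hvalp, hvalq]
  have : ∀ x : Fin n, ∑ f : {j // j ≠ p} → Fin n, h x (f (⟨q, hpq⟩ : {j // j ≠ p}))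
      = (n ^ (Fintype.card {j // j ≠ p} - 1)) • ∑ j, h x j :=
    fun x => sum_fun_apply (ι := {j // j ≠ p}) ⟨q, hpq⟩ (h x)
  simp only [this, ← Finset.smul_sum]
  congr 2
  simp [Fintype.card_subtype_compl]
  omega

set_option maxHeartbeats 1000000 in
theorem stmt_5 (n b M d : ℕ) (hn : 0 < n) (hb : 0 < b) (hM : 0 < M) (hd : 0 < d)
    (Lbar α : ℝ) (hLbar : 0 < Lbar)
    (F : Fin M → Fin n → (EuclideanSpace ℝ (Fin d) → EuclideanSpace ℝ (Fin d)))
    (havg : ∀ m, ∀ u v : EuclideanSpace ℝ (Fin d),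
      (1 / (n : ℝ)) * ∑ i, ‖F m i u - F m i v‖ ^ 2 ≤ Lbar ^ 2 * ‖u - v‖ ^ 2)
    (Fm : Fin M → EuclideanSpace ℝ (Fin d) → EuclideanSpace ℝ (Fin d))
    (hFm : ∀ m x, Fm m x = (1 / (n : ℝ)) • ∑ i, F m i x)
    (z z' w : PiLp 2 (fun _ : Fin M => EuclideanSpace ℝ (Fin d)))
    (δ : ((Fin M × Fin b) → Fin n) → PiLp 2 (fun _ : Fin M => EuclideanSpace ℝ (Fin d)))
    (hδ : ∀ ω m, δ ω m =
      (1 / (b : ℝ)) • (∑ l : Fin b,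
        (F m (ω (m, l)) (z m) - F m (ω (m, l)) (w m)
          + α • (F m (ω (m, l)) (z m) - F m (ω (m, l)) (z' m))))
      + Fm m (w m))
    (Eδ : PiLp 2 (fun _ : Fin M => EuclideanSpace ℝ (Fin d)))
    (hEδ : Eδ = ((Fintype.card ((Fin M × Fin b) → Fin n) : ℝ))⁻¹ • ∑ ω, δ ω) :
    (∀ m, Eδ m = Fm m (z m) + α • (Fm m (z m) - Fm m (z' m))) ∧
    ((Fintype.card ((Fin M × Fin b) → Fin n) : ℝ))⁻¹ * (∑ ω, ‖δ ω - Eδ‖ ^ 2) ≤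
      (2 * Lbar ^ 2 / b) * (‖z - w‖ ^ 2 + α ^ 2 * ‖z - z'‖ ^ 2) := by
  classical
  have hn' : (n : ℝ) ≠ 0 := Nat.cast_ne_zero.mpr hn.ne'
  have hb' : (b : ℝ) ≠ 0 := Nat.cast_ne_zero.mpr hb.ne'
  set g : Fin M → Fin n → EuclideanSpace ℝ (Fin d) := fun m i =>
    F m i (z m) - F m i (w m) + α • (F m i (z m) - F m i (z' m)) with hg
  set gb : Fin M → EuclideanSpace ℝ (Fin d) := fun m =>
    Fm m (z m) - Fm m (w m) + α • (Fm m (z m) - Fm m (z' m)) with hgb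
  have hδ' : ∀ ω m, δ ω m = (1 / (b : ℝ)) • (∑ l, g m (ω (m, l))) + Fm m (w m) := hδ
  have hgsum : ∀ m, ∑ i, g m i = (n : ℝ) • gb m := by
    intro m
    simp only [hg, hgb, hFm, Finset.sum_add_distrib, Finset.sum_sub_distrib,
      smul_sub, ← Finset.smul_sum]
    match_scalars <;> field_simp <;> ring
  -- cardinalities
  have hcard : Fintype.card ((Fin M × Fin b) → Fin n) = n ^ (M * b) := by simp
  set K : ℕ := n ^ (M * b - 1) with hK
  have hNK : (Fintype.card ((Fin M × Fin b) → Fin n) : ℝ) = (n : ℝ) * K := by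
    rw [hcard, hK]
    rw [show M * b = (M * b - 1) + 1 by
      have : 1 ≤ M * b := Nat.one_le_iff_ne_zero.mpr (by positivity)
      omega]
    push_cast [pow_succ]
    ring
  have hKcard : K = n ^ (Fintype.card (Fin M × Fin b) - 1) := by simp [hK]
  -- Part 1
  have part1 : ∀ m, Eδ m = Fm m (z m) + α • (Fm m (z m) - Fm m (z' m)) := by
    intro m
    have happ : Eδ m = ((Fintype.card ((Fin M × Fin b) → Fin n) : ℝ))⁻¹ • ∑ ω, δ ω m := by
      rw [hEδ, PiLp.smul_apply]
      congr 1
      rw [WithLp.ofLp_sum]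
      exact Finset.sum_apply m Finset.univ (fun ω => (δ ω).ofLp)
    have hsum : ∑ ω : (Fin M × Fin b) → Fin n, δ ω m
        = (Fintype.card ((Fin M × Fin b) → Fin n) : ℝ) • (gb m + Fm m (w m)) := by
      simp only [hδ']
      rw [Finset.sum_add_distrib, Finset.sum_const, Finset.card_univ, ← Finset.smul_sum,
        Finset.sum_comm]
      have hL1 : ∀ l : Fin b, ∑ ω : (Fin M × Fin b) → Fin n, g m (ω (m, l))
          = K • ∑ i, g m i := by
        intro l
        rw [sum_fun_apply (m, l) (g m), hKcard]
      simp only [hL1, hgsum, Finset.sum_const, Finset.card_univ, Fintype.card_fin]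
      rw [← Nat.cast_smul_eq_nsmul ℝ b, ← Nat.cast_smul_eq_nsmul ℝ K,
        ← Nat.cast_smul_eq_nsmul ℝ (Fintype.card ((Fin M × Fin b) → Fin n)), hNK]
      match_scalars <;> field_simp <;> ring
    rw [happ, hsum, smul_smul, inv_mul_cancel₀, one_smul, hgb]
    · module
    · rw [hNK]; positivity
  refine ⟨part1, ?_⟩
  -- Part 2
  have hK0 : (K : ℝ) ≠ 0 := Nat.cast_ne_zero.mpr (by positivity)
  have hdiff : ∀ (ω : (Fin M × Fin b) → Fin n) m,
      δ ω m - Eδ m = (1 / (b : ℝ)) • ∑ l, (g m (ω (m, l)) - gb m) := by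
    intro ω m
    rw [hδ' ω m, part1 m, Finset.sum_sub_distrib, smul_sub, Finset.sum_const,
      Finset.card_univ, Fintype.card_fin, ← Nat.cast_smul_eq_nsmul ℝ b]
    simp only [hgb]
    match_scalars <;> field_simp <;> ring
  have hnormsq : ∀ ω : (Fin M × Fin b) → Fin n, ‖δ ω - Eδ‖ ^ 2
      = ∑ m, (1 / (b : ℝ)) ^ 2 * ∑ l : Fin b, ∑ l' : Fin b,
          ⟪g m (ω (m, l)) - gb m, g m (ω (m, l')) - gb m⟫ := by
    intro ω
    rw [PiLp.norm_sq_eq_of_L2]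
    refine Finset.sum_congr rfl fun m _ => ?_
    rw [PiLp.sub_apply, hdiff ω m, norm_smul, mul_pow, Real.norm_eq_abs, sq_abs,
      ← real_inner_self_eq_norm_sq, sum_inner]
    congr 1
    exact Finset.sum_congr rfl fun l _ => inner_sum _ _ _
  have hzero : ∀ m, ∑ i, (g m i - gb m) = 0 := by
    intro m
    rw [Finset.sum_sub_distrib, hgsum, Finset.sum_const, Finset.card_univ, Fintype.card_fin,
      ← Nat.cast_smul_eq_nsmul ℝ, sub_self]
  have hdiag : ∀ m (l : Fin b),
      ∑ ω : (Fin M × Fin b) → Fin n, ⟪g m (ω (m, l)) - gb m, g m (ω (m, l)) - gb m⟫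
        = (K : ℝ) * ∑ i, ‖g m i - gb m‖ ^ 2 := by
    intro m l
    rw [sum_fun_apply (m, l) (fun i => ⟪g m i - gb m, g m i - gb m⟫), ← hKcard,
      nsmul_eq_mul]
    congr 1
    exact Finset.sum_congr rfl fun i _ => real_inner_self_eq_norm_sq _
  have hcross : ∀ m (l l' : Fin b), l ≠ l' →
      ∑ ω : (Fin M × Fin b) → Fin n, ⟪g m (ω (m, l)) - gb m, g m (ω (m, l')) - gb m⟫ = 0 := by
    intro m l l' hll
    have hne : ((m, l') : Fin M × Fin b) ≠ (m, l) := by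
      intro h
      exact hll ((congrArg Prod.snd h).symm)
    rw [sum_fun_apply2 (m, l) (m, l') hne (fun i j => ⟪g m i - gb m, g m j - gb m⟫)]
    have h2 : ∑ i, ∑ j, ⟪g m i - gb m, g m j - gb m⟫ = 0 := by
      simp only [← inner_sum, hzero, inner_zero_right, Finset.sum_const_zero]
    rw [h2, smul_zero]
  have hsum2 : ∑ ω : (Fin M × Fin b) → Fin n, ‖δ ω - Eδ‖ ^ 2
      = ∑ m, (1 / (b : ℝ)) ^ 2 * ((b : ℝ) * ((K : ℝ) * ∑ i, ‖g m i - gb m‖ ^ 2)) := by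
    simp only [hnormsq]
    rw [Finset.sum_comm]
    refine Finset.sum_congr rfl fun m _ => ?_
    rw [← Finset.mul_sum]
    congr 1
    rw [Finset.sum_comm]
    have hrow : ∀ l : Fin b,
        ∑ ω : (Fin M × Fin b) → Fin n, ∑ l' : Fin b,
          ⟪g m (ω (m, l)) - gb m, g m (ω (m, l')) - gb m⟫
        = (K : ℝ) * ∑ i, ‖g m i - gb m‖ ^ 2 := by
      intro l
      rw [Finset.sum_comm, Finset.sum_eq_single l]
      · exact hdiag m l
      · intro l' _ hl'
        exact hcross m l l' (Ne.symm hl')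
      · intro h
        exact absurd (Finset.mem_univ l) h
    simp only [hrow, Finset.sum_const, Finset.card_univ, Fintype.card_fin, nsmul_eq_mul]
  -- variance bound per block
  have hVle : ∀ m, ∑ i, ‖g m i - gb m‖ ^ 2 ≤ ∑ i, ‖g m i‖ ^ 2 := by
    intro m
    have hinner : ∑ i, ⟪g m i, gb m⟫ = (n : ℝ) * ‖gb m‖ ^ 2 := by
      rw [← sum_inner, hgsum, real_inner_smul_left, real_inner_self_eq_norm_sq]
    have hrw : ∑ i, ‖g m i - gb m‖ ^ 2 = ∑ i, ‖g m i‖ ^ 2 - (n : ℝ) * ‖gb m‖ ^ 2 := by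
      simp only [norm_sub_sq_real, Finset.sum_add_distrib, Finset.sum_sub_distrib,
        ← Finset.mul_sum, hinner, Finset.sum_const, Finset.card_univ, Fintype.card_fin,
        nsmul_eq_mul]
      ring
    rw [hrw]
    have : 0 ≤ (n : ℝ) * ‖gb m‖ ^ 2 := mul_nonneg (Nat.cast_nonneg n) (sq_nonneg _)
    linarith
  have hgle : ∀ m i, ‖g m i‖ ^ 2 ≤ 2 * ‖F m i (z m) - F m i (w m)‖ ^ 2
      + 2 * (α ^ 2 * ‖F m i (z m) - F m i (z' m)‖ ^ 2) := by
    intro m i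
    have h1 : ‖g m i‖ ≤ ‖F m i (z m) - F m i (w m)‖ + |α| * ‖F m i (z m) - F m i (z' m)‖ := by
      simpa [hg, norm_smul] using
        norm_add_le (F m i (z m) - F m i (w m)) (α • (F m i (z m) - F m i (z' m)))
    nlinarith [norm_nonneg (g m i), sq_abs α, abs_nonneg α,
      norm_nonneg (F m i (z m) - F m i (w m)), norm_nonneg (F m i (z m) - F m i (z' m)),
      sq_nonneg (‖F m i (z m) - F m i (w m)‖ - |α| * ‖F m i (z m) - F m i (z' m)‖)]
  have hm : ∀ m, (1 / ((n : ℝ) * b)) * ∑ i, ‖g m i‖ ^ 2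
      ≤ (1 / (b : ℝ)) * (2 * Lbar ^ 2 * ‖z m - w m‖ ^ 2
          + 2 * α ^ 2 * Lbar ^ 2 * ‖z m - z' m‖ ^ 2) := by
    intro m
    have ha := havg m (z m) (w m)
    have hc := havg m (z m) (z' m)
    have hnpos : (0 : ℝ) < 1 / n := by positivity
    have hbpos : (0 : ℝ) < 1 / b := by positivity
    have hsumle : ∑ i, ‖g m i‖ ^ 2 ≤ 2 * ∑ i, ‖F m i (z m) - F m i (w m)‖ ^ 2
        + 2 * (α ^ 2 * ∑ i, ‖F m i (z m) - F m i (z' m)‖ ^ 2) := by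
      calc ∑ i, ‖g m i‖ ^ 2
          ≤ ∑ i, (2 * ‖F m i (z m) - F m i (w m)‖ ^ 2
              + 2 * (α ^ 2 * ‖F m i (z m) - F m i (z' m)‖ ^ 2)) :=
            Finset.sum_le_sum fun i _ => hgle m i
        _ = _ := by
            rw [Finset.sum_add_distrib, ← Finset.mul_sum, ← Finset.mul_sum, ← Finset.mul_sum]
    have hc' : α ^ 2 * (1 / (n : ℝ) * ∑ i, ‖F m i (z m) - F m i (z' m)‖ ^ 2)
        ≤ α ^ 2 * (Lbar ^ 2 * ‖z m - z' m‖ ^ 2) := mul_le_mul_of_nonneg_left hc (sq_nonneg α)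
    have hmid : (1 / (n : ℝ)) * ∑ i, ‖g m i‖ ^ 2
        ≤ 2 * Lbar ^ 2 * ‖z m - w m‖ ^ 2 + 2 * α ^ 2 * Lbar ^ 2 * ‖z m - z' m‖ ^ 2 := by
      have := mul_le_mul_of_nonneg_left hsumle hnpos.le
      nlinarith [this, ha, hc']
    calc (1 / ((n : ℝ) * b)) * ∑ i, ‖g m i‖ ^ 2
        = (1 / (b : ℝ)) * ((1 / (n : ℝ)) * ∑ i, ‖g m i‖ ^ 2) := by ring
      _ ≤ _ := mul_le_mul_of_nonneg_left hmid hbpos.le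
  calc ((Fintype.card ((Fin M × Fin b) → Fin n) : ℝ))⁻¹ * (∑ ω, ‖δ ω - Eδ‖ ^ 2)
      = ∑ m, (1 / ((n : ℝ) * b)) * ∑ i, ‖g m i - gb m‖ ^ 2 := by
        rw [hsum2, Finset.mul_sum]
        refine Finset.sum_congr rfl fun m _ => ?_
        rw [hNK]
        field_simp
    _ ≤ ∑ m, (1 / (b : ℝ)) * (2 * Lbar ^ 2 * ‖z m - w m‖ ^ 2
          + 2 * α ^ 2 * Lbar ^ 2 * ‖z m - z' m‖ ^ 2) := by
        refine Finset.sum_le_sum fun m _ => ?_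
        exact le_trans (mul_le_mul_of_nonneg_left (hVle m) (by positivity)) (hm m)
    _ = (2 * Lbar ^ 2 / b) * (∑ m, ‖z m - w m‖ ^ 2 + α ^ 2 * ∑ m, ‖z m - z' m‖ ^ 2) := by
        simp only [mul_add, Finset.sum_add_distrib, ← Finset.mul_sum]
        ring
    _ = (2 * Lbar ^ 2 / b) * (‖z - w‖ ^ 2 + α ^ 2 * ‖z - z'‖ ^ 2) := by
        rw [PiLp.norm_sq_eq_of_L2, PiLp.norm_sq_eq_of_L2]
        simp only [PiLp.sub_apply]
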